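/- For 0 < p < q and any vector x ∈ R^N, σ_s(x)_q ≤ D_{p,q} s^{-(1/p-1/q)} ||x||_{p,∞}, where D_{p,q} = (q/p - 1)^{-1/q}. -/

import Mathlib

/-- The ℓp (quasi-)norm on ℝ^N: `(∑ |x ℓ|^p)^(1/p)`. -/
noncomputable def pnorm (p : ℝ) {N : ℕ} (x : Fin N → ℝ) : ℝ :=
  (∑ i, |x i| ^ p) ^ (1 / p)

/-- A vector is `s`-sparse if at most `s` of its coordinates are nonzero. -/
def IsSparse (s : ℕ) {N : ℕ} (z : Fin N → ℝ) : Prop :=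
  ∃ S : Finset (Fin N), S.card ≤ s ∧ ∀ i ∉ S, z i = 0

/-- The error of best `s`-term approximation of `x` in `ℓ_q`. -/
noncomputable def bestApprox (s : ℕ) (q : ℝ) {N : ℕ} (x : Fin N → ℝ) : ℝ :=
  sInf {r | ∃ z : Fin N → ℝ, IsSparse s z ∧ r = pnorm q (x - z)}

/-- The weak-ℓp quasi-norm: `max_ℓ ℓ^{1/p} x*_ℓ` where `x*` is the
non-increasing rearrangement of the absolute values of `x`
(`Tuple.sort` sorts increasingly, so `ℓ.rev` picks the ℓ-th largest). -/
noncomputable def wnorm (p : ℝ) {N : ℕ} (x : Fin N → ℝ) : ℝ :=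
  ⨆ ℓ : Fin N, ((ℓ : ℝ) + 1) ^ (1 / p) * |x (Tuple.sort (fun i => |x i|) ℓ.rev)|

/-- Tail sum comparison with the integral of `t ^ (-r)`. -/
lemma tail_sum_le (r : ℝ) (hr : 1 < r) (s n : ℕ) (hs : 0 < s) :
    ∑ j ∈ Finset.range n, ((s : ℝ) + j + 1) ^ (-r) ≤ (s : ℝ) ^ (1 - r) / (r - 1) := by
  have hs0 : (0 : ℝ) < s := by exact_mod_cast hs
  have hanti : AntitoneOn (fun t : ℝ => t ^ (-r)) (Set.Icc (s : ℝ) ((s : ℝ) + n)) := by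
    intro a ha b hb hab
    exact Real.rpow_le_rpow_of_nonpos (lt_of_lt_of_le hs0 ha.1) hab (by linarith)
  have key := hanti.sum_le_integral
  have hint : (∫ t in (s : ℝ)..((s : ℝ) + n), t ^ (-r)) =
      (((s : ℝ) + n) ^ (-r + 1) - (s : ℝ) ^ (-r + 1)) / (-r + 1) := by
    apply integral_rpow
    right
    constructor
    · intro h; linarith [neg_eq_iff_eq_neg.mp h]
    · rw [Set.uIcc_of_le (le_add_of_nonneg_right (Nat.cast_nonneg n))]
      intro h
      exact absurd h.1 (not_le.mpr hs0)
  have hterm : ∀ j ∈ Finset.range n,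
      ((s : ℝ) + j + 1) ^ (-r) = (fun t : ℝ => t ^ (-r)) ((s : ℝ) + ((j + 1 : ℕ) : ℝ)) := by
    intro j _; push_cast; ring_nf
  calc ∑ j ∈ Finset.range n, ((s : ℝ) + j + 1) ^ (-r)
      = ∑ j ∈ Finset.range n, (fun t : ℝ => t ^ (-r)) ((s : ℝ) + ((j + 1 : ℕ) : ℝ)) :=
        Finset.sum_congr rfl hterm
    _ ≤ ∫ t in (s : ℝ)..((s : ℝ) + n), t ^ (-r) := key
    _ = (((s : ℝ) + n) ^ (-r + 1) - (s : ℝ) ^ (-r + 1)) / (-r + 1) := hint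
    _ ≤ (s : ℝ) ^ (1 - r) / (r - 1) := by
        have h1 : (0 : ℝ) < r - 1 := by linarith
        have h2 : (0 : ℝ) ≤ ((s : ℝ) + n) ^ (-r + 1) := Real.rpow_nonneg (by positivity) _
        have h3 : (-r + 1 : ℝ) = 1 - r := by ring
        rw [h3]
        have e : (((s : ℝ) + n) ^ (1 - r) - (s : ℝ) ^ (1 - r)) / (1 - r)
            = ((s : ℝ) ^ (1 - r) - ((s : ℝ) + n) ^ (1 - r)) / (r - 1) := by
          rw [div_eq_div_iff (ne_of_lt (by linarith : (1 - r) < (0:ℝ))) h1.ne']; ring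
        rw [e]
        rw [h3] at h2
        gcongr
        linarith

/-- For `0 < p < q`, `σ_s(x)_q ≤ D_{p,q} s^{-(1/p-1/q)} ‖x‖_{p,∞}` with
`D_{p,q} = (q/p - 1)^{-1/q}`. -/
theorem bestApprox_le_wnorm {N : ℕ} (p q : ℝ) (hp : 0 < p) (hpq : p < q)
    (s : ℕ) (hs : 0 < s) (x : Fin N → ℝ) :
    bestApprox s q x ≤
      (q / p - 1) ^ (-(1 / q)) * (s : ℝ) ^ (-(1 / p - 1 / q)) * wnorm p x := by
  have hq : 0 < q := lt_trans hp hpq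
  have hr : 1 < q / p := (one_lt_div hp).mpr hpq
  set r : ℝ := q / p with hrdef
  set σ : Equiv.Perm (Fin N) := Tuple.sort (fun i => |x i|) with hσ
  set M : ℝ := wnorm p x with hM
  have hM0 : 0 ≤ M := by
    apply Real.iSup_nonneg
    intro ℓ
    exact mul_nonneg (Real.rpow_nonneg (by positivity) _) (abs_nonneg _)
  -- pointwise bound from the weak norm
  have key : ∀ k : Fin N, |x (σ k.rev)| ≤ M * ((k : ℝ) + 1) ^ (-(1 / p)) := by
    intro k
    have hc : (0 : ℝ) < ((k : ℝ) + 1) ^ (1 / p) := Real.rpow_pos_of_pos (by positivity) _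
    have hle : ((k : ℝ) + 1) ^ (1 / p) * |x (σ k.rev)| ≤ M := by
      have := le_ciSup (f := fun ℓ : Fin N => ((ℓ : ℝ) + 1) ^ (1 / p) * |x (σ ℓ.rev)|)
        (Set.Finite.bddAbove (Set.finite_range _)) k
      rw [hM]; unfold wnorm; rw [← hσ]; exact this
    rw [Real.rpow_neg (by positivity), ← div_eq_mul_inv, le_div_iff₀ hc, mul_comm]
    exact hle
  -- the s-sparse approximant
  set z : Fin N → ℝ := fun i => if ((σ.symm i).rev : ℕ) < s then x i else 0 with hz
  have hsparse : IsSparse s z := by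
    refine ⟨Finset.univ.filter (fun i => ((σ.symm i).rev : ℕ) < s), ?_, ?_⟩
    · have : (Finset.univ.filter (fun i => ((σ.symm i).rev : ℕ) < s)).card ≤
          (Finset.range s).card := by
        apply Finset.card_le_card_of_injOn (fun i => ((σ.symm i).rev : ℕ))
        · intro i hi
          simp only [Finset.mem_coe, Finset.mem_filter] at hi
          exact Finset.mem_range.mpr hi.2
        · intro a _ b _ hab
          have : (σ.symm a).rev = (σ.symm b).rev := Fin.ext hab
          have := Fin.rev_injective this
          exact σ.symm.injective this
      simpa using this
    · intro i hi
      simp only [Finset.mem_filter, Finset.mem_univ, true_and] at hi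
      show (if ((σ.symm i).rev : ℕ) < s then x i else 0) = 0
      exact if_neg hi
  set T : ℝ := ∑ i, |x i - z i| ^ q with hTdef
  have hT0 : 0 ≤ T := Finset.sum_nonneg fun i _ => Real.rpow_nonneg (abs_nonneg _) _
  -- rewrite T as a sum over sorted positions
  have hT : T = ∑ k : Fin N, (if s ≤ (k : ℕ) then |x (σ k.rev)| ^ q else 0) := by
    rw [hTdef]
    rw [← Equiv.sum_comp (Fin.revPerm.trans σ : Equiv.Perm (Fin N))
      (fun i => |x i - z i| ^ q)]
    apply Finset.sum_congr rfl
    intro k _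
    simp only [Equiv.trans_apply, Fin.revPerm_apply]
    have hss : ((σ.symm (σ k.rev)).rev : ℕ) = (k : ℕ) := by
      rw [Equiv.symm_apply_apply, Fin.rev_rev]
    have hzz : z (σ k.rev) = if (k : ℕ) < s then x (σ k.rev) else 0 := by
      show (if ((σ.symm (σ k.rev)).rev : ℕ) < s then x (σ k.rev) else 0) = _
      rw [hss]
    by_cases hk : (k : ℕ) < s
    · rw [hzz, if_pos hk, if_neg (by omega), sub_self, abs_zero,
        Real.zero_rpow (ne_of_gt hq)]
    · rw [hzz, if_neg hk, if_pos (by omega), sub_zero]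
  -- bound each tail term
  have hTle : T ≤ M ^ q * ((s : ℝ) ^ (1 - r) / (r - 1)) := by
    have step1 : T ≤ ∑ k : Fin N,
        (if s ≤ (k : ℕ) then M ^ q * ((k : ℝ) + 1) ^ (-r) else 0) := by
      rw [hT]
      apply Finset.sum_le_sum
      intro k _
      by_cases hk : s ≤ (k : ℕ)
      · rw [if_pos hk, if_pos hk]
        have h1 : |x (σ k.rev)| ^ q ≤ (M * ((k : ℝ) + 1) ^ (-(1 / p))) ^ q :=
          Real.rpow_le_rpow (abs_nonneg _) (key k) (le_of_lt hq)
        refine le_trans h1 (le_of_eq ?_)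
        rw [Real.mul_rpow hM0 (Real.rpow_nonneg (by positivity) _)]
        congr 1
        rw [← Real.rpow_mul (by positivity)]
        congr 1
        rw [hrdef]
        field_simp
      · rw [if_neg hk, if_neg hk]
    have step2 : ∑ k : Fin N, (if s ≤ (k : ℕ) then M ^ q * ((k : ℝ) + 1) ^ (-r) else 0)
        = M ^ q * ∑ k : Fin N, (if s ≤ (k : ℕ) then ((k : ℝ) + 1) ^ (-r) else 0) := by
      rw [Finset.mul_sum]
      apply Finset.sum_congr rfl
      intro k _
      by_cases hk : s ≤ (k : ℕ) <;> simp [hk]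
    have step3 : ∑ k : Fin N, (if s ≤ (k : ℕ) then ((k : ℝ) + 1) ^ (-r) else 0)
        ≤ (s : ℝ) ^ (1 - r) / (r - 1) := by
      rw [Fin.sum_univ_eq_sum_range (fun k => if s ≤ k then ((k : ℝ) + 1) ^ (-r) else 0)]
      have heq : ∑ i ∈ Finset.range N, (if s ≤ i then ((i : ℝ) + 1) ^ (-r) else 0)
          = ∑ i ∈ Finset.Ico s N, ((i : ℝ) + 1) ^ (-r) := by
        rw [← Finset.sum_filter]
        apply Finset.sum_congr _ (fun _ _ => rfl)
        ext i
        simp only [Finset.mem_filter, Finset.mem_range, Finset.mem_Ico]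
        omega
      rw [heq, Finset.sum_Ico_eq_sum_range]
      calc ∑ j ∈ Finset.range (N - s), (((s + j : ℕ) : ℝ) + 1) ^ (-r)
          = ∑ j ∈ Finset.range (N - s), ((s : ℝ) + j + 1) ^ (-r) := by
            apply Finset.sum_congr rfl; intro j _; push_cast; ring_nf
        _ ≤ (s : ℝ) ^ (1 - r) / (r - 1) := tail_sum_le r hr s (N - s) hs
    calc T ≤ ∑ k : Fin N, (if s ≤ (k : ℕ) then M ^ q * ((k : ℝ) + 1) ^ (-r) else 0) := step1
      _ = M ^ q * ∑ k : Fin N, (if s ≤ (k : ℕ) then ((k : ℝ) + 1) ^ (-r) else 0) := step2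
      _ ≤ M ^ q * ((s : ℝ) ^ (1 - r) / (r - 1)) := by
          apply mul_le_mul_of_nonneg_left step3 (Real.rpow_nonneg hM0 q)
  -- conclude via the infimum
  have hmem : pnorm q (x - z) ∈
      {r | ∃ z' : Fin N → ℝ, IsSparse s z' ∧ r = pnorm q (x - z')} :=
    ⟨z, hsparse, rfl⟩
  have hbdd : BddBelow {r | ∃ z' : Fin N → ℝ, IsSparse s z' ∧ r = pnorm q (x - z')} := by
    refine ⟨0, fun u hu => ?_⟩
    obtain ⟨z', _, rfl⟩ := hu
    exact Real.rpow_nonneg (Finset.sum_nonneg fun i _ => Real.rpow_nonneg (abs_nonneg _) _) _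
  have h1 : bestApprox s q x ≤ pnorm q (x - z) := csInf_le hbdd hmem
  have h2 : pnorm q (x - z) = T ^ (1 / q) := by
    unfold pnorm
    congr 1
  have hrs : (0 : ℝ) < (s : ℝ) := by exact_mod_cast hs
  have hr1 : (0 : ℝ) < r - 1 := by linarith
  have h3 : T ^ (1 / q) ≤ (M ^ q * ((s : ℝ) ^ (1 - r) / (r - 1))) ^ (1 / q) :=
    Real.rpow_le_rpow hT0 hTle (by positivity)
  have h4 : (M ^ q * ((s : ℝ) ^ (1 - r) / (r - 1))) ^ (1 / q)
      = (r - 1) ^ (-(1 / q)) * (s : ℝ) ^ (-(1 / p - 1 / q)) * M := by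
    rw [div_eq_mul_inv, Real.mul_rpow (Real.rpow_nonneg hM0 q)
        (by positivity),
      Real.mul_rpow (Real.rpow_nonneg (le_of_lt hrs) _) (by positivity),
      ← Real.rpow_mul hM0, mul_one_div_cancel (ne_of_gt hq), Real.rpow_one,
      ← Real.rpow_mul (le_of_lt hrs),
      Real.inv_rpow (le_of_lt hr1), ← Real.rpow_neg (le_of_lt hr1)]
    have hexp : (1 - r) * (1 / q) = -(1 / p - 1 / q) := by
      rw [hrdef]; field_simp; try ring
    rw [hexp]
    ring
  calc bestApprox s q x ≤ pnorm q (x - z) := h1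
    _ = T ^ (1 / q) := h2
    _ ≤ (M ^ q * ((s : ℝ) ^ (1 - r) / (r - 1))) ^ (1 / q) := h3
    _ = (r - 1) ^ (-(1 / q)) * (s : ℝ) ^ (-(1 / p - 1 / q)) * M := h4
    _ = (q / p - 1) ^ (-(1 / q)) * (s : ℝ) ^ (-(1 / p - 1 / q)) * wnorm p x := by
        rw [hrdef, hM]
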